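/- If I is a proper ideal in the ring B₁(X) of real-valued Baire one functions on a topological space X, then the family Z_B[I] = {Z(f) : f ∈ I} of zero sets of members of I is a Z_B-filter on X, i.e., it does not contain the empty set, is closed under finite intersections, and contains every zero set of a Baire one function that contains some member of the family. -/

import Mathlib

open Filter Topology

/-- A function `f : X → ℝ` is Baire one if it is a pointwise limit of a
sequence of continuous functions. -/
def IsBaireOne {X : Type*} [TopologicalSpace X] (f : X → ℝ) : Prop :=
  ∃ F : ℕ → C(X, ℝ), ∀ x, Tendsto (fun n => F n x) atTop (𝓝 (f x))

/-- The ring `B₁(X)` of real valued Baire one functions on `X`, as a subring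
of the ring of all functions `X → ℝ`. -/
def B1 (X : Type*) [TopologicalSpace X] : Subring (X → ℝ) where
  carrier := {f | IsBaireOne f}
  zero_mem' := ⟨fun _ => 0, fun x => by simpa using tendsto_const_nhds⟩
  one_mem' := ⟨fun _ => 1, fun x => by simpa using tendsto_const_nhds⟩
  add_mem' := by
    rintro f g ⟨F, hF⟩ ⟨G, hG⟩
    exact ⟨fun n => F n + G n, fun x => by simpa using (hF x).add (hG x)⟩
  mul_mem' := by
    rintro f g ⟨F, hF⟩ ⟨G, hG⟩
    exact ⟨fun n => F n * G n, fun x => by simpa using (hF x).mul (hG x)⟩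
  neg_mem' := by
    rintro f ⟨F, hF⟩
    exact ⟨fun n => -F n, fun x => by simpa using (hF x).neg⟩

variable {X : Type*} [TopologicalSpace X]

/-- The constant function with value `r`, as an element of `B₁(X)`. -/
def bconst (X : Type*) [TopologicalSpace X] (r : ℝ) : B1 X :=
  ⟨fun _ => r, ⟨fun _ => ContinuousMap.const X r, fun x => by simpa using tendsto_const_nhds⟩⟩

theorem babs_mem (f : B1 X) : (fun x => |(f : X → ℝ) x|) ∈ B1 X := by
  obtain ⟨F, hF⟩ := f.2
  exact ⟨fun n => ⟨fun x => |F n x|, (F n).continuous.abs⟩, fun x => (hF x).abs⟩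

/-- The absolute value `|f|` of a Baire one function. -/
def babs (f : B1 X) : B1 X := ⟨fun x => |(f : X → ℝ) x|, babs_mem f⟩

/-- The zero set `Z(f)` of `f ∈ B₁(X)`. -/
def zset (f : B1 X) : Set X := {x | (f : X → ℝ) x = 0}

/-- `Z(B₁(X))`, the family of all zero sets of Baire one functions on `X`. -/
def zsets (X : Type*) [TopologicalSpace X] : Set (Set X) := {Z | ∃ f : B1 X, zset f = Z}

/-- `Z_B[I] = {Z(f) : f ∈ I}` for an ideal `I` of `B₁(X)`. -/
def zbi (I : Ideal (B1 X)) : Set (Set X) := {Z | ∃ f ∈ I, zset f = Z}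

/-- A `Z_B`-filter on `X`: a nonempty family of zero sets of Baire one functions,
not containing `∅`, closed under finite intersections and upward closed in `Z(B₁(X))`. -/
def IsZBFilter (F : Set (Set X)) : Prop :=
  F.Nonempty ∧ F ⊆ zsets X ∧ ∅ ∉ F ∧
    (∀ Z₁ ∈ F, ∀ Z₂ ∈ F, Z₁ ∩ Z₂ ∈ F) ∧
    (∀ Z ∈ F, ∀ Z' ∈ zsets X, Z ⊆ Z' → Z' ∈ F)

/-- A `Z_B`-ultrafilter on `X`: a maximal `Z_B`-filter. -/
def IsZBUltrafilter (U : Set (Set X)) : Prop :=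
  IsZBFilter U ∧ ∀ F : Set (Set X), IsZBFilter F → U ⊆ F → F = U

/-- The finite intersection property: every nonempty finite subfamily has
nonempty intersection. -/
def FIP {X : Type*} (B : Set (Set X)) : Prop :=
  ∀ S : Finset (Set X), ↑S ⊆ B → S.Nonempty → (⋂₀ (S : Set (Set X))).Nonempty

/-- An ideal `I` of `B₁(X)` is a `Z_B`-ideal if `Z_B⁻¹[Z_B[I]] = I`. -/
def IsZBIdeal (I : Ideal (B1 X)) : Prop :=
  ∀ f : B1 X, zset f ∈ zbi I → f ∈ I

/-- An ideal of `B₁(X)` is fixed if the zero sets of its members have a common point. -/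
def FixedIdeal (I : Ideal (B1 X)) : Prop :=
  (⋂ f ∈ (I : Set (B1 X)), zset f).Nonempty

/-- A prime `Z_B`-filter. -/
def IsPrimeZBFilter (F : Set (Set X)) : Prop :=
  IsZBFilter F ∧ ∀ Z₁ ∈ zsets X, ∀ Z₂ ∈ zsets X, Z₁ ∪ Z₂ ∈ F → Z₁ ∈ F ∨ Z₂ ∈ F

/-- `M(f) ≥ 0` in the quotient `B₁(X)/M`: the coset contains a nonnegative function. -/
def QNonneg (M : Ideal (B1 X)) (a : B1 X ⧸ M) : Prop :=
  ∃ g : B1 X, (∀ x, 0 ≤ (g : X → ℝ) x) ∧ Ideal.Quotient.mk M g = a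

/-- `M(f) > 0` in the quotient `B₁(X)/M`. -/
def QPos (M : Ideal (B1 X)) (a : B1 X ⧸ M) : Prop := QNonneg M a ∧ a ≠ 0

/-- A maximal ideal `M` of `B₁(X)` is real if the canonical copy of `ℝ`
(via constant functions) is all of `B₁(X)/M`. -/
def RealIdeal (M : Ideal (B1 X)) : Prop :=
  Function.Surjective (fun r : ℝ => Ideal.Quotient.mk M (bconst X r))

/-- An `F_σ` subset: a countable union of closed sets. -/
def IsFSigma {X : Type*} [TopologicalSpace X] (s : Set X) : Prop :=
  ∃ F : ℕ → Set X, (∀ n, IsClosed (F n)) ∧ s = ⋃ n, F n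
theorem binv_mem {X : Type*} [TopologicalSpace X] (f : B1 X)
    (hf : ∀ x, (f : X → ℝ) x ≠ 0) :
    (fun x => ((f : X → ℝ) x)⁻¹) ∈ B1 X := by
  obtain ⟨F, hF⟩ := f.2
  refine ⟨fun n => ⟨fun x => F n x / max ((F n x) ^ 2) (1 / (n + 1)), ?_⟩, fun x => ?_⟩
  · refine (F n).continuous.div
      (((F n).continuous.pow 2).max continuous_const) fun x => ?_
    have : (0 : ℝ) < 1 / (n + 1) := by positivity
    exact ne_of_gt (lt_of_lt_of_le this (le_max_right _ _))
  · have h1 : Tendsto (fun n : ℕ => max ((F n x) ^ 2) (1 / (n + 1) : ℝ)) atTop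
        (𝓝 (max (((f : X → ℝ) x) ^ 2) 0)) :=
      ((hF x).pow 2).max tendsto_one_div_add_atTop_nhds_zero_nat
    have hne : ((f : X → ℝ) x) ^ 2 ≠ 0 := pow_ne_zero _ (hf x)
    have hmax : max (((f : X → ℝ) x) ^ 2) 0 = ((f : X → ℝ) x) ^ 2 :=
      max_eq_left (sq_nonneg _)
    rw [hmax] at h1
    have := (hF x).div h1 hne
    simpa [div_eq_mul_inv, pow_two, mul_inv, ← mul_assoc,
      mul_inv_cancel₀ (hf x), Pi.mul_def, Pi.inv_def] using this

/-- If `I` is a proper ideal of `B₁(X)` then `Z_B[I]` is a `Z_B`-filter on `X`. -/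
theorem zbi_isZBFilter {X : Type*} [TopologicalSpace X]
    (I : Ideal (B1 X)) (hI : I ≠ ⊤) : IsZBFilter (zbi I) := by
  refine ⟨⟨zset (0 : B1 X), 0, I.zero_mem, rfl⟩, ?_, ?_, ?_, ?_⟩
  · rintro Z ⟨f, _, rfl⟩; exact ⟨f, rfl⟩
  · rintro ⟨f, hfI, hfz⟩
    have hf : ∀ x, (f : X → ℝ) x ≠ 0 := by
      intro x hx
      exact absurd (hfz ▸ hx : x ∈ (∅ : Set X)) (Set.notMem_empty x)
    set g : B1 X := ⟨_, binv_mem f hf⟩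
    have : (1 : B1 X) ∈ I := by
      have : g * f ∈ I := I.mul_mem_left g hfI
      convert this using 1
      ext x
      exact (inv_mul_cancel₀ (hf x)).symm
    exact hI (Ideal.eq_top_iff_one I |>.mpr this)
  · rintro Z₁ ⟨f, hfI, rfl⟩ Z₂ ⟨g, hgI, rfl⟩
    refine ⟨f * f + g * g, I.add_mem (I.mul_mem_left f hfI) (I.mul_mem_left g hgI), ?_⟩
    ext x
    simp only [zset, Set.mem_setOf_eq, Set.mem_inter_iff]
    constructor
    · intro h
      have h' : (f : X → ℝ) x * (f : X → ℝ) x + (g : X → ℝ) x * (g : X → ℝ) x = 0 := h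
      have := (add_eq_zero_iff_of_nonneg (mul_self_nonneg _) (mul_self_nonneg _)).mp h'
      exact ⟨mul_self_eq_zero.mp this.1, mul_self_eq_zero.mp this.2⟩
    · rintro ⟨h1, h2⟩
      show (f : X → ℝ) x * (f : X → ℝ) x + (g : X → ℝ) x * (g : X → ℝ) x = 0
      rw [h1, h2]; ring
  · rintro Z ⟨f, hfI, rfl⟩ Z' ⟨g, rfl⟩ hsub
    refine ⟨g * f, I.mul_mem_left g hfI, ?_⟩
    ext x
    simp only [zset, Set.mem_setOf_eq]
    constructor
    · intro h
      have h' : (g : X → ℝ) x * (f : X → ℝ) x = 0 := h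
      rcases mul_eq_zero.mp h' with h | h
      · exact h
      · exact hsub h
    · intro h
      show (g : X → ℝ) x * (f : X → ℝ) x = 0
      rw [h, zero_mul]
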